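/- Let E = EuclideanSpace ℝ (Fin 3), let T, M : ℝ → E, let κ, g_t, g_m : ℝ → ℝ, and let α ∈ ℝ. Assume T, M, g_t, g_m are differentiable at α; that deriv T α = κ α • M α and deriv M α = −(κ α) • T α; and that g_t s ^ 2 + g_m s ^ 2 = 1 for all s in some neighborhood of α. Define f : ℝ → E by f s = g_t s • T s + g_m s • M s and set G = κ α − g_m α * deriv g_t α + g_t α * deriv g_m α. Then deriv f α = −G • (g_m α • T α − g_t α • M α). -/

import Mathlib

/-- Equation (f'repp) of the paper: for the planar Darboux frame `{T, M}` with
signed curvature `κ` (so `T' = κ M`, `M' = −κ T`) and the unit reference ruling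
direction `f = g_t T + g_m M` (with `g_t² + g_m² = 1` near `α`), the derivative
is `f' = −G(g_m T − g_t M)`, where `G = κ − g_m g_t' + g_t g_m'`. -/
theorem stmt9
    (T M : ℝ → EuclideanSpace ℝ (Fin 3)) (κ gt gm : ℝ → ℝ) (α : ℝ)
    (hT : DifferentiableAt ℝ T α) (hM : DifferentiableAt ℝ M α)
    (hgt : DifferentiableAt ℝ gt α) (hgm : DifferentiableAt ℝ gm α)
    (hT' : deriv T α = κ α • M α) (hM' : deriv M α = -(κ α) • T α)
    (hunit : ∀ᶠ s in nhds α, gt s ^ 2 + gm s ^ 2 = 1)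
    (f : ℝ → EuclideanSpace ℝ (Fin 3))
    (hf : ∀ s, f s = gt s • T s + gm s • M s)
    (G : ℝ) (hG : G = κ α - gm α * deriv gt α + gt α * deriv gm α) :
    deriv f α = -G • (gm α • T α - gt α • M α) := by
  set dgt := deriv gt α with hdgt
  set dgm := deriv gm α with hdgm
  -- unit condition at α
  have eq1 : gt α ^ 2 + gm α ^ 2 = 1 := hunit.self_of_nhds
  -- derivative of the unit condition
  have hsum : HasDerivAt (fun s => gt s ^ 2 + gm s ^ 2)
      (2 * gt α ^ 1 * dgt + 2 * gm α ^ 1 * dgm) α := by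
    have h := ((hgt.hasDerivAt.pow 2).add (hgm.hasDerivAt.pow 2))
    simp at h ⊢
    exact h
  have h0 : deriv (fun s => gt s ^ 2 + gm s ^ 2) α = 0 := by
    have hev : (fun s => gt s ^ 2 + gm s ^ 2) =ᶠ[nhds α] (fun _ => (1 : ℝ)) := hunit
    simpa using hev.deriv_eq
  have key : gt α * dgt + gm α * dgm = 0 := by
    have := hsum.deriv
    rw [h0] at this
    nlinarith [this]
  -- derivative of f
  have hfd : HasDerivAt f
      (gt α • deriv T α + dgt • T α + (gm α • deriv M α + dgm • M α)) α := by
    have h1 := (hgt.hasDerivAt.smul hT.hasDerivAt)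
    have h2 := (hgm.hasDerivAt.smul hM.hasDerivAt)
    have := h1.add h2
    simp only [hT.hasDerivAt.deriv, hM.hasDerivAt.deriv] at this ⊢
    exact this.congr_of_eventuallyEq (by filter_upwards with s using (hf s))
  have hD : deriv f α = (dgt - gm α * κ α) • T α + (gt α * κ α + dgm) • M α := by
    rw [hfd.deriv, hT', hM']
    rw [smul_smul, smul_smul, sub_smul, add_smul]
    ring_nf
    module
  rw [hD, hG]
  have c1 : dgt - gm α * κ α = -(κ α - gm α * dgt + gt α * dgm) * gm α := by
    linear_combination gt α * key - dgt * eq1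
  have c2 : gt α * κ α + dgm = (κ α - gm α * dgt + gt α * dgm) * gt α := by
    linear_combination gm α * key - dgm * eq1
  rw [c1, c2]
  module
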